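/- Let M be a Hausdorff, σ-compact C^∞ manifold without boundary modeled on a finite-dimensional real vector space, and let f₀, f₁ : M → ℝ be C^∞ functions which are regular equations of the same cooriented hypersurface: f₀⁻¹(0) = f₁⁻¹(0) =: M₀, for every p ∈ M₀ one has d(f₀)_p ≠ 0 and d(f₁)_p ≠ 0, and for every p ∈ M₀ there exists c > 0 with d(f₁)_p = c · d(f₀)_p. Then there exists a smooth vector field Z on M which is boundary-gradient-like for both f₀ and f₁ simultaneously: d(f₀)_p(Z p) ≥ 0 and d(f₁)_p(Z p) ≥ 0 for every p ∈ M, with both strict inequalities holding for every p ∈ M₀. -/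

import Mathlib

open Manifold

section Aux

open Bundle Set Filter Function

set_option linter.unusedSectionVars false

variable {E : Type*} [NormedAddCommGroup E] [NormedSpace ℝ E] [FiniteDimensional ℝ E]
    {M : Type*} [TopologicalSpace M] [ChartedSpace E M]
    [IsManifold 𝓘(ℝ, E) (⊤ : ℕ∞) M]

/-- A smooth local section of the tangent bundle through a prescribed vector. -/
lemma exists_local_section (q : M) (w : TangentSpace 𝓘(ℝ, E) q) :
    ∃ (σ : (p : M) → TangentSpace 𝓘(ℝ, E) p) (U : Set M), IsOpen U ∧ q ∈ U ∧ σ q = w ∧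
      ContMDiffOn 𝓘(ℝ, E) 𝓘(ℝ, E).tangent (⊤ : ℕ∞)
        (fun p : M => (⟨p, σ p⟩ : TangentBundle 𝓘(ℝ, E) M)) U := by
  set e := trivializationAt E (TangentSpace 𝓘(ℝ, E)) q with he
  have hq : q ∈ e.baseSet := mem_baseSet_trivializationAt E (TangentSpace 𝓘(ℝ, E)) q
  set v : E := (e ⟨q, w⟩).2 with hv
  refine ⟨fun p => e.symm p v, e.baseSet, e.open_baseSet, hq, e.symm_apply_apply_mk hq w, ?_⟩
  have h1 : ContMDiffOn 𝓘(ℝ, E) 𝓘(ℝ, E).tangent (⊤ : ℕ∞)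
      (fun p : M => e.toPartialHomeomorph.symm (p, v)) e.baseSet := by
    refine (e.contMDiffOn_symm).comp (contMDiffOn_id.prodMk contMDiffOn_const) ?_
    intro p hp
    simp only [mem_preimage, e.mem_target]
    exact hp
  exact h1.congr fun p hp => (e.mk_symm hp v)

set_option linter.unusedSectionVars false

lemma continuousOn_mfderiv_section {f : M → ℝ} (hf : ContMDiff 𝓘(ℝ, E) 𝓘(ℝ, ℝ) (⊤ : ℕ∞) f)
    {σ : (p : M) → TangentSpace 𝓘(ℝ, E) p} {U : Set M}
    (hσ : ContMDiffOn 𝓘(ℝ, E) 𝓘(ℝ, E).tangent (⊤ : ℕ∞)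
        (fun p : M => (⟨p, σ p⟩ : TangentBundle 𝓘(ℝ, E) M)) U) :
    ContinuousOn (fun p : M => (mfderiv 𝓘(ℝ, E) 𝓘(ℝ, ℝ) f p (σ p) : ℝ)) U := by
  have h1 : Continuous (fun x : TangentBundle 𝓘(ℝ, ℝ) ℝ => x.2) := by
    have := (tangentBundleModelSpaceHomeomorph 𝓘(ℝ, ℝ) :
      TangentBundle 𝓘(ℝ, ℝ) ℝ ≃ₜ ModelProd ℝ ℝ).continuous
    exact (continuous_snd.comp this)
  have h2 : Continuous (tangentMap 𝓘(ℝ, E) 𝓘(ℝ, ℝ) f) := hf.continuous_tangentMap (by exact_mod_cast (le_top : (1:ℕ∞) ≤ ⊤))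
  have h3 : ContinuousOn (fun p : M => (⟨p, σ p⟩ : TangentBundle 𝓘(ℝ, E) M)) U :=
    hσ.continuousOn
  exact (h1.comp h2).comp_continuousOn h3

lemma exists_local_data (f₀ f₁ : M → ℝ)
    (hf₀ : ContMDiff 𝓘(ℝ, E) 𝓘(ℝ, ℝ) (⊤ : ℕ∞) f₀)
    (hf₁ : ContMDiff 𝓘(ℝ, E) 𝓘(ℝ, ℝ) (⊤ : ℕ∞) f₁)
    (hreg₀ : ∀ p : M, f₀ p = 0 → mfderiv 𝓘(ℝ, E) 𝓘(ℝ, ℝ) f₀ p ≠ 0)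
    (hcoor : ∀ p : M, f₀ p = 0 → ∃ c : ℝ, 0 < c ∧
      mfderiv 𝓘(ℝ, E) 𝓘(ℝ, ℝ) f₁ p = c • mfderiv 𝓘(ℝ, E) 𝓘(ℝ, ℝ) f₀ p)
    (q : M) :
    ∃ (σ : (p : M) → TangentSpace 𝓘(ℝ, E) p) (U : Set M), IsOpen U ∧ q ∈ U ∧
      ContMDiffOn 𝓘(ℝ, E) 𝓘(ℝ, E).tangent (⊤ : ℕ∞)
        (fun p : M => (⟨p, σ p⟩ : TangentBundle 𝓘(ℝ, E) M)) U ∧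
      (∀ p ∈ U, (0:ℝ) ≤ mfderiv 𝓘(ℝ, E) 𝓘(ℝ, ℝ) f₀ p (σ p) ∧
        (0:ℝ) ≤ mfderiv 𝓘(ℝ, E) 𝓘(ℝ, ℝ) f₁ p (σ p)) ∧
      (∀ p ∈ U, f₀ p = 0 → (0:ℝ) < mfderiv 𝓘(ℝ, E) 𝓘(ℝ, ℝ) f₀ p (σ p) ∧
        (0:ℝ) < mfderiv 𝓘(ℝ, E) 𝓘(ℝ, ℝ) f₁ p (σ p)) := by
  by_cases hq : f₀ q = 0
  · set D₀ : E →L[ℝ] ℝ := mfderiv 𝓘(ℝ, E) 𝓘(ℝ, ℝ) f₀ q with hD₀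
    set D₁ : E →L[ℝ] ℝ := mfderiv 𝓘(ℝ, E) 𝓘(ℝ, ℝ) f₁ q with hD₁
    have hD₀ne : D₀ ≠ 0 := hreg₀ q hq
    obtain ⟨w₀, hw₀⟩ : ∃ w₀ : E, D₀ w₀ ≠ 0 := by
      by_contra hcon; push_neg at hcon
      exact hD₀ne (ContinuousLinearMap.ext fun w => hcon w)
    set w : E := (D₀ w₀)⁻¹ • w₀ with hw
    have hdw : D₀ w = 1 := by
      rw [hw, map_smul, smul_eq_mul, inv_mul_cancel₀ hw₀]
    obtain ⟨c, hc, hceq⟩ := hcoor q hq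
    have hdw1 : D₁ w = c := by
      have : D₁ = c • D₀ := hceq
      rw [this, ContinuousLinearMap.smul_apply, hdw, smul_eq_mul, mul_one]
    obtain ⟨σ, U, hUo, hqU, hσq, hσ⟩ := exists_local_section q w
    set g₀ : M → ℝ := fun p => mfderiv 𝓘(ℝ, E) 𝓘(ℝ, ℝ) f₀ p (σ p) with hg₀
    set g₁ : M → ℝ := fun p => mfderiv 𝓘(ℝ, E) 𝓘(ℝ, ℝ) f₁ p (σ p) with hg₁
    have hg₀c : ContinuousOn g₀ U := continuousOn_mfderiv_section hf₀ hσ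
    have hg₁c : ContinuousOn g₁ U := continuousOn_mfderiv_section hf₁ hσ
    set V : Set M := (U ∩ g₀ ⁻¹' Ioi 0) ∩ (U ∩ g₁ ⁻¹' Ioi 0) with hV
    have hVo : IsOpen V :=
      (hg₀c.isOpen_inter_preimage hUo isOpen_Ioi).inter
        (hg₁c.isOpen_inter_preimage hUo isOpen_Ioi)
    have hg0q : g₀ q = 1 := by
      show D₀ (σ q) = 1
      rw [hσq]; exact hdw
    have hg1q : g₁ q = c := by
      show D₁ (σ q) = c
      rw [hσq]; exact hdw1
    have hqV : q ∈ V :=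
      ⟨⟨hqU, by simp only [mem_preimage, mem_Ioi, hg0q]; norm_num⟩,
       ⟨hqU, by simp only [mem_preimage, mem_Ioi, hg1q]; exact hc⟩⟩
    refine ⟨σ, V, hVo, hqV, hσ.mono (fun p hp => hp.1.1), ?_, ?_⟩
    · exact fun p hp => ⟨le_of_lt hp.1.2, le_of_lt hp.2.2⟩
    · exact fun p hp _ => ⟨hp.1.2, hp.2.2⟩
  · -- away from the zero level set, take the zero vector field
    refine ⟨fun _ => 0, f₀ ⁻¹' {0}ᶜ, ?_, hq, ?_, ?_, ?_⟩
    · exact (isClosed_singleton.preimage hf₀.continuous).isOpen_compl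
    · exact (contMDiff_zeroSection ℝ (TangentSpace 𝓘(ℝ, E))).contMDiffOn
    · intro p _; exact ⟨(map_zero _).ge, (map_zero _).ge⟩
    · intro p hp h0; exact absurd h0 hp

theorem stmt_2' [T2Space M] [SigmaCompactSpace M]
    (f₀ f₁ : M → ℝ)
    (hf₀ : ContMDiff 𝓘(ℝ, E) 𝓘(ℝ, ℝ) (⊤ : ℕ∞) f₀)
    (hf₁ : ContMDiff 𝓘(ℝ, E) 𝓘(ℝ, ℝ) (⊤ : ℕ∞) f₁)
    (hlevel : f₀ ⁻¹' {0} = f₁ ⁻¹' {0})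
    (hreg₀ : ∀ p : M, f₀ p = 0 → mfderiv 𝓘(ℝ, E) 𝓘(ℝ, ℝ) f₀ p ≠ 0)
    (hreg₁ : ∀ p : M, f₁ p = 0 → mfderiv 𝓘(ℝ, E) 𝓘(ℝ, ℝ) f₁ p ≠ 0)
    (hcoor : ∀ p : M, f₀ p = 0 → ∃ c : ℝ, 0 < c ∧
      mfderiv 𝓘(ℝ, E) 𝓘(ℝ, ℝ) f₁ p = c • mfderiv 𝓘(ℝ, E) 𝓘(ℝ, ℝ) f₀ p) :
    ∃ Z : (p : M) → TangentSpace 𝓘(ℝ, E) p,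
      ContMDiff 𝓘(ℝ, E) 𝓘(ℝ, E).tangent (⊤ : ℕ∞)
        (fun p : M => (⟨p, Z p⟩ : TangentBundle 𝓘(ℝ, E) M)) ∧
      (∀ p : M, (0:ℝ) ≤ (mfderiv 𝓘(ℝ, E) 𝓘(ℝ, ℝ) f₀ p (Z p) : ℝ)) ∧
      (∀ p : M, (0:ℝ) ≤ (mfderiv 𝓘(ℝ, E) 𝓘(ℝ, ℝ) f₁ p (Z p) : ℝ)) ∧
      (∀ p : M, f₀ p = 0 → (0:ℝ) < (mfderiv 𝓘(ℝ, E) 𝓘(ℝ, ℝ) f₀ p (Z p) : ℝ)) ∧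
      (∀ p : M, f₁ p = 0 → (0:ℝ) < (mfderiv 𝓘(ℝ, E) 𝓘(ℝ, ℝ) f₁ p (Z p) : ℝ)) := by
  classical
  choose σ U hUo hqU hsm hge hgt using
    exists_local_data (M := M) f₀ f₁ hf₀ hf₁ hreg₀ hcoor
  obtain ⟨ρ, hρ⟩ := SmoothPartitionOfUnity.exists_isSubordinate (I := 𝓘(ℝ, E))
    (isClosed_univ : IsClosed (univ : Set M)) U hUo (fun q _ => mem_iUnion.2 ⟨q, hqU q⟩)
  set Z : (p : M) → TangentSpace 𝓘(ℝ, E) p := fun p => ∑ᶠ q, ρ q p • σ q p with hZ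
  -- membership in `U q` for indices in the (pointwise) support
  have hmemU : ∀ (q p : M), ρ q p ≠ 0 → p ∈ U q := fun q p h =>
    hρ q (subset_closure (by exact h))
  -- pointwise formula
  have key : ∀ (D : (p : M) → (TangentSpace 𝓘(ℝ, E) p →L[ℝ] ℝ)) (p : M),
      D p (Z p) = ∑ q ∈ ρ.finsupport p, ρ q p * D p (σ q p) := by
    intro D p
    have hZp : Z p = ∑ q ∈ ρ.finsupport p, ρ q p • σ q p :=
      (ρ.sum_finsupport_smul_eq_finsum p (fun q p => σ q p)).symm
    rw [hZp, map_sum]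
    exact Finset.sum_congr rfl fun q _ => by rw [map_smul, smul_eq_mul]
  have hnonneg : ∀ (f : M → ℝ),
      (∀ q, ∀ p ∈ U q, (0:ℝ) ≤ mfderiv 𝓘(ℝ, E) 𝓘(ℝ, ℝ) f p (σ q p)) →
      ∀ p : M, (0:ℝ) ≤ (mfderiv 𝓘(ℝ, E) 𝓘(ℝ, ℝ) f p (Z p) : ℝ) := by
    intro f hf p
    set D : (p : M) → (TangentSpace 𝓘(ℝ, E) p →L[ℝ] ℝ) :=
      fun p => mfderiv 𝓘(ℝ, E) 𝓘(ℝ, ℝ) f p with hD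
    have k := key D p
    have hS : (0:ℝ) ≤ ∑ q ∈ ρ.finsupport p, ρ q p * D p (σ q p) := by
      refine Finset.sum_nonneg fun q hqmem => ?_
      have hne : ρ q p ≠ 0 := by
        simpa using (ρ.mem_finsupport p).1 hqmem
      exact mul_nonneg (ρ.nonneg q p) (hf q p (hmemU q p hne))
    exact le_of_le_of_eq hS k.symm
  have hpos : ∀ (f : M → ℝ),
      (∀ q, ∀ p ∈ U q, (0:ℝ) ≤ mfderiv 𝓘(ℝ, E) 𝓘(ℝ, ℝ) f p (σ q p)) →
      (∀ q, ∀ p ∈ U q, f₀ p = 0 → (0:ℝ) < mfderiv 𝓘(ℝ, E) 𝓘(ℝ, ℝ) f p (σ q p)) →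
      ∀ p : M, f₀ p = 0 → (0:ℝ) < (mfderiv 𝓘(ℝ, E) 𝓘(ℝ, ℝ) f p (Z p) : ℝ) := by
    intro f hf hf' p hp0
    set D : (p : M) → (TangentSpace 𝓘(ℝ, E) p →L[ℝ] ℝ) :=
      fun p => mfderiv 𝓘(ℝ, E) 𝓘(ℝ, ℝ) f p with hD
    have k := key D p
    obtain ⟨q₀, hq₀⟩ := ρ.exists_pos_of_mem (mem_univ p)
    have hq₀mem : q₀ ∈ ρ.finsupport p := (ρ.mem_finsupport p).2 (by simpa using ne_of_gt hq₀)
    have hS : (0:ℝ) < ∑ q ∈ ρ.finsupport p, ρ q p * D p (σ q p) := by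
      refine Finset.sum_pos' (fun q hqmem => ?_) ⟨q₀, hq₀mem, ?_⟩
      · have hne : ρ q p ≠ 0 := by simpa using (ρ.mem_finsupport p).1 hqmem
        exact mul_nonneg (ρ.nonneg q p) (hf q p (hmemU q p hne))
      · exact mul_pos hq₀ (hf' q₀ p (hmemU q₀ p (ne_of_gt hq₀)) hp0)
    exact lt_of_lt_of_eq hS k.symm
  refine ⟨Z, ?_, ?_, ?_, ?_, ?_⟩
  · -- smoothness
    intro x₀
    set e := trivializationAt E (TangentSpace 𝓘(ℝ, E)) x₀ with he
    have hx₀ : x₀ ∈ e.baseSet := mem_baseSet_trivializationAt E (TangentSpace 𝓘(ℝ, E)) x₀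
    rw [Bundle.contMDiffAt_section]
    set T := ρ.fintsupport x₀ with hT
    have hterm : ∀ q ∈ T, ContMDiffAt 𝓘(ℝ, E) 𝓘(ℝ, E) (⊤ : ℕ∞)
        (fun p => ρ q p • (e ⟨p, σ q p⟩).2) x₀ := by
      intro q hqT
      have hx₀U : x₀ ∈ U q := hρ q ((ρ.mem_fintsupport_iff x₀ q).1 hqT)
      have hσq : ContMDiffAt 𝓘(ℝ, E) 𝓘(ℝ, E).tangent (⊤ : ℕ∞)
          (fun p : M => (⟨p, σ q p⟩ : TangentBundle 𝓘(ℝ, E) M)) x₀ :=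
        (hsm q).contMDiffAt ((hUo q).mem_nhds hx₀U)
      rw [Bundle.contMDiffAt_section] at hσq
      exact ((ρ q).contMDiff.contMDiffAt).smul hσq
    have hsum : ContMDiffAt 𝓘(ℝ, E) 𝓘(ℝ, E) (⊤ : ℕ∞)
        (fun p => ∑ q ∈ T, ρ q p • (e ⟨p, σ q p⟩).2) x₀ :=
      contMDiffAt_finset_sum (fun q hq => hterm q hq)
    refine hsum.congr_of_eventuallyEq ?_
    filter_upwards [e.open_baseSet.mem_nhds hx₀, ρ.eventually_finsupport_subset x₀]
      with p hp hsub
    have hL := e.linear ℝ hp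
    set L : TangentSpace 𝓘(ℝ, E) p →ₗ[ℝ] E := IsLinearMap.mk' _ hL with hLdef
    have hZp : Z p = ∑ q ∈ T, ρ q p • σ q p := by
      rw [hZ]
      refine finsum_eq_sum_of_support_subset _ ?_
      intro q hqs
      have : ρ q p ≠ 0 := fun h => by simp [h] at hqs
      exact hsub ((ρ.mem_finsupport p).2 (by simpa using this))
    show (e ⟨p, Z p⟩).2 = _
    have : (e ⟨p, Z p⟩).2 = L (Z p) := rfl
    rw [this, hZp, map_sum]
    exact Finset.sum_congr rfl fun q _ => by rw [map_smul]; rfl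
  · exact hnonneg f₀ fun q p hpU => (hge q p hpU).1
  · exact hnonneg f₁ fun q p hpU => (hge q p hpU).2
  · exact fun p hp => hpos f₀ (fun q p hpU => (hge q p hpU).1)
      (fun q p hpU h0 => (hgt q p hpU h0).1) p hp
  · intro p hp
    have hp0 : f₀ p = 0 := by
      have : p ∈ f₁ ⁻¹' {0} := by simpa using hp
      rw [← hlevel] at this
      simpa using this
    exact hpos f₁ (fun q p hpU => (hge q p hpU).2)
      (fun q p hpU h0 => (hgt q p hpU h0).2) p hp0

end Aux

/-- If `f₀, f₁` are smooth regular equations of the same cooriented hypersurface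
`M₀ = f₀⁻¹(0) = f₁⁻¹(0)` in a Hausdorff σ-compact smooth manifold `M`, then there is a smooth
vector field `Z` which is boundary-gradient-like for both `f₀` and `f₁` simultaneously. -/
theorem stmt_2 {E : Type*} [NormedAddCommGroup E] [NormedSpace ℝ E] [FiniteDimensional ℝ E]
    {M : Type*} [TopologicalSpace M] [ChartedSpace E M]
    [IsManifold 𝓘(ℝ, E) (⊤ : ℕ∞) M] [T2Space M] [SigmaCompactSpace M]
    (f₀ f₁ : M → ℝ)
    (hf₀ : ContMDiff 𝓘(ℝ, E) 𝓘(ℝ, ℝ) (⊤ : ℕ∞) f₀)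
    (hf₁ : ContMDiff 𝓘(ℝ, E) 𝓘(ℝ, ℝ) (⊤ : ℕ∞) f₁)
    (hlevel : f₀ ⁻¹' {0} = f₁ ⁻¹' {0})
    (hreg₀ : ∀ p : M, f₀ p = 0 → mfderiv 𝓘(ℝ, E) 𝓘(ℝ, ℝ) f₀ p ≠ 0)
    (hreg₁ : ∀ p : M, f₁ p = 0 → mfderiv 𝓘(ℝ, E) 𝓘(ℝ, ℝ) f₁ p ≠ 0)
    (hcoor : ∀ p : M, f₀ p = 0 → ∃ c : ℝ, 0 < c ∧
      mfderiv 𝓘(ℝ, E) 𝓘(ℝ, ℝ) f₁ p = c • mfderiv 𝓘(ℝ, E) 𝓘(ℝ, ℝ) f₀ p) :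
    ∃ Z : (p : M) → TangentSpace 𝓘(ℝ, E) p,
      ContMDiff 𝓘(ℝ, E) 𝓘(ℝ, E).tangent (⊤ : ℕ∞)
        (fun p : M => (⟨p, Z p⟩ : TangentBundle 𝓘(ℝ, E) M)) ∧
      (∀ p : M, (0:ℝ) ≤ (mfderiv 𝓘(ℝ, E) 𝓘(ℝ, ℝ) f₀ p (Z p) : ℝ)) ∧
      (∀ p : M, (0:ℝ) ≤ (mfderiv 𝓘(ℝ, E) 𝓘(ℝ, ℝ) f₁ p (Z p) : ℝ)) ∧
      (∀ p : M, f₀ p = 0 → (0:ℝ) < (mfderiv 𝓘(ℝ, E) 𝓘(ℝ, ℝ) f₀ p (Z p) : ℝ)) ∧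
      (∀ p : M, f₁ p = 0 → (0:ℝ) < (mfderiv 𝓘(ℝ, E) 𝓘(ℝ, ℝ) f₁ p (Z p) : ℝ)) := by
  exact stmt_2' f₀ f₁ hf₀ hf₁ hlevel hreg₀ hreg₁ hcoor
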